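/- Let a₀ = (a₀[k])_{k∈ℤ} ∈ ℓ¹(ℤ) be a real sequence with frequency response A₀(ω) = Σ_k a₀[k] e^{−ikω}, and autocorrelation γ_{a₀}[k] = Σ_q a₀[q] a₀[q−k], so that |A₀(ω)|² = γ_{a₀}[0] + 2 Σ_{k≥1} γ_{a₀}[k] cos(kω). Let f ∈ L¹(ℝ) ∩ L∞(ℝ) and set g(τ) = −(1/π) ∫₀^∞ f(ω) sin(ωτ) dω and G(τ) = −(1/π) ∫₀^∞ |A₀(ω)|² f(ω) sin(2ωτ) dω. Then for all τ ∈ ℝ, G(τ) = γ_{a₀}[0] g(2τ) + Σ_{k≥1} γ_{a₀}[k] ( g(2τ+k) + g(2τ−k) ). -/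

import Mathlib

open MeasureTheory Real Complex

/-- Two-scale recursion for wavelet-packet cross-correlations: with
`A₀(ω) = Σ_k a₀[k] e^{−ikω}`, `γ_{a₀}[k] = Σ_q a₀[q]a₀[q−k]`,
`g(τ) = −(1/π)∫₀^∞ f(ω) sin(ωτ) dω` and
`G(τ) = −(1/π)∫₀^∞ |A₀(ω)|² f(ω) sin(2ωτ) dω`, one has
`G(τ) = γ_{a₀}[0] g(2τ) + Σ_{k≥1} γ_{a₀}[k](g(2τ+k) + g(2τ−k))`. -/
theorem packet_crosscorr_recursion (a₀ : ℤ → ℝ)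
    (ha : Summable fun k : ℤ => |a₀ k|)
    (A₀ : ℝ → ℂ)
    (hA : ∀ ω : ℝ, A₀ ω = ∑' k : ℤ, (a₀ k : ℂ) * Complex.exp (-Complex.I * k * ω))
    (γa : ℤ → ℝ)
    (hγa : ∀ k : ℤ, γa k = ∑' q : ℤ, a₀ q * a₀ (q - k))
    (hγsum : Summable fun k : ℤ => |γa k|)
    (hmod : ∀ ω : ℝ, ‖A₀ ω‖ ^ 2 = γa 0 + 2 * ∑' k : ℕ, γa (k + 1) * Real.cos (((k : ℝ) + 1) * ω))
    (f : ℝ → ℝ)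
    (hf1 : Integrable f (volume : Measure ℝ))
    (hfbd : ∃ B : ℝ, ∀ ω : ℝ, |f ω| ≤ B)
    (g G : ℝ → ℝ)
    (hg : ∀ τ : ℝ, g τ = -(1 / π) * ∫ ω in Set.Ioi (0 : ℝ), f ω * Real.sin (ω * τ))
    (hG : ∀ τ : ℝ, G τ = -(1 / π) * ∫ ω in Set.Ioi (0 : ℝ),
      ‖A₀ ω‖ ^ 2 * f ω * Real.sin (2 * ω * τ)) :
    ∀ τ : ℝ, G τ = γa 0 * g (2 * τ) +
      ∑' k : ℕ, γa (k + 1) * (g (2 * τ + ((k : ℝ) + 1)) + g (2 * τ - ((k : ℝ) + 1))) := by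
  intro τ
  -- shorthand for the basic sine integrals
  set μ := (volume : Measure ℝ).restrict (Set.Ioi (0 : ℝ)) with hμ
  have intf : ∀ x : ℝ, Integrable (fun ω => f ω * Real.sin (ω * x)) μ := by
    intro x
    have h1 : Integrable (fun ω => Real.sin (ω * x) * f ω) μ :=
      (hf1.restrict).bdd_mul
        ((Real.continuous_sin.comp (continuous_id.mul continuous_const)).aestronglyMeasurable)
        (c := 1) (Filter.Eventually.of_forall fun ω => by simpa using Real.abs_sin_le_one (ω * x))
    exact h1.congr (Filter.Eventually.of_forall fun ω => mul_comm _ _)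
  set I : ℝ → ℝ := fun x => ∫ ω in Set.Ioi (0 : ℝ), f ω * Real.sin (ω * x) with hI
  -- summability of the shifted autocorrelation
  have hγN : Summable fun k : ℕ => |γa ((k : ℤ) + 1)| := by
    have := hγsum.comp_injective (i := fun k : ℕ => (k : ℤ) + 1)
      (fun a b h => by exact_mod_cast add_right_cancel h)
    exact this
  have hγN' : Summable fun k : ℕ => |γa (k : ℤ)| :=
    hγsum.comp_injective (fun a b h => by exact_mod_cast h)
  -- the family of functions
  set F : ℕ → ℝ → ℝ := fun k ω =>
    Nat.rec (γa 0 * (f ω * Real.sin (ω * (2 * τ))))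
      (fun n _ => γa ((n : ℤ) + 1) *
        (f ω * Real.sin (ω * (2 * τ + ((n : ℝ) + 1))) +
         f ω * Real.sin (ω * (2 * τ - ((n : ℝ) + 1))))) k with hF
  have hF0 : ∀ ω, F 0 ω = γa 0 * (f ω * Real.sin (ω * (2 * τ))) := fun ω => rfl
  have hFS : ∀ (n : ℕ) (ω), F (n + 1) ω = γa ((n : ℤ) + 1) *
      (f ω * Real.sin (ω * (2 * τ + ((n : ℝ) + 1))) +
       f ω * Real.sin (ω * (2 * τ - ((n : ℝ) + 1)))) := fun n ω => rfl
  -- pointwise bound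
  have hFbd : ∀ (k : ℕ) (ω : ℝ), |F k ω| ≤ |γa (k : ℤ)| * (2 * |f ω|) := by
    intro k ω
    cases k with
    | zero =>
        rw [hF0]
        simp only [Nat.cast_zero, abs_mul]
        have h1 : |Real.sin (ω * (2 * τ))| ≤ 1 := Real.abs_sin_le_one (ω * (2 * τ))
        nlinarith [abs_nonneg (γa 0), abs_nonneg (f ω), abs_nonneg (Real.sin (ω * (2 * τ))),
          mul_le_mul_of_nonneg_left h1 (abs_nonneg (f ω))]
    | succ n =>
        rw [hFS, abs_mul]
        have hn : ((n : ℕ) + 1 : ℤ) = ((n : ℤ) + 1) := by push_cast; ring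
        rw [hn]
        refine mul_le_mul_of_nonneg_left ?_ (abs_nonneg _)
        calc |f ω * Real.sin (ω * (2 * τ + ((n : ℝ) + 1))) +
              f ω * Real.sin (ω * (2 * τ - ((n : ℝ) + 1)))|
            ≤ |f ω * Real.sin (ω * (2 * τ + ((n : ℝ) + 1)))| +
              |f ω * Real.sin (ω * (2 * τ - ((n : ℝ) + 1)))| := abs_add_le _ _
          _ ≤ |f ω| * 1 + |f ω| * 1 := by
              rw [abs_mul, abs_mul]
              gcongr <;> exact Real.abs_sin_le_one _
          _ = 2 * |f ω| := by ring
  -- pointwise summability of F · ω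
  have hFsummable : ∀ ω : ℝ, Summable fun k : ℕ => F k ω := by
    intro ω
    refine Summable.of_norm_bounded ((hγN'.mul_right (2 * |f ω|)).congr fun k => rfl) ?_
    intro k
    simpa [Real.norm_eq_abs, mul_assoc] using hFbd k ω
  -- the pointwise identity
  have hpt : ∀ ω : ℝ, ‖A₀ ω‖ ^ 2 * f ω * Real.sin (2 * ω * τ) = ∑' k : ℕ, F k ω := by
    intro ω
    rw [Summable.tsum_eq_zero_add (hFsummable ω), hF0, hmod ω]
    have hsin0 : Real.sin (2 * ω * τ) = Real.sin (ω * (2 * τ)) := by ring_nf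
    rw [hsin0]
    have hterm : ∀ n : ℕ, F (n + 1) ω =
        2 * (γa ((n : ℤ) + 1) * Real.cos (((n : ℝ) + 1) * ω)) * (f ω * Real.sin (ω * (2 * τ))) := by
      intro n
      rw [hFS]
      have e1 : ω * (2 * τ + ((n : ℝ) + 1)) = ω * (2 * τ) + ((n : ℝ) + 1) * ω := by ring
      have e2 : ω * (2 * τ - ((n : ℝ) + 1)) = ω * (2 * τ) - ((n : ℝ) + 1) * ω := by ring
      rw [e1, e2, Real.sin_add, Real.sin_sub]
      ring
    rw [tsum_congr hterm]
    have : ∑' n : ℕ, 2 * (γa ((n : ℤ) + 1) * Real.cos (((n : ℝ) + 1) * ω)) *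
        (f ω * Real.sin (ω * (2 * τ)))
        = (∑' n : ℕ, γa ((n : ℤ) + 1) * Real.cos (((n : ℝ) + 1) * ω)) *
          (2 * (f ω * Real.sin (ω * (2 * τ)))) := by
      rw [← tsum_mul_right]
      exact tsum_congr fun n => by ring
    rw [this]
    ring
  -- integrability of each F k
  have hFint : ∀ k : ℕ, Integrable (F k) μ := by
    intro k
    cases k with
    | zero =>
        have h1 : Integrable (fun ω => γa 0 * (f ω * Real.sin (ω * (2 * τ)))) μ :=
          (intf (2 * τ)).const_mul _
        exact h1.congr (Filter.Eventually.of_forall fun ω => (hF0 ω).symm)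
    | succ n =>
        have h1 : Integrable (fun ω => γa ((n : ℤ) + 1) *
            (f ω * Real.sin (ω * (2 * τ + ((n : ℝ) + 1))) +
             f ω * Real.sin (ω * (2 * τ - ((n : ℝ) + 1))))) μ :=
          ((intf (2 * τ + ((n : ℝ) + 1))).add (intf (2 * τ - ((n : ℝ) + 1)))).const_mul _
        exact h1.congr (Filter.Eventually.of_forall fun ω => (hFS n ω).symm)
  -- summability of integrals of norms
  set C : ℝ := ∫ ω in Set.Ioi (0 : ℝ), |f ω| with hC
  have hCnn : 0 ≤ C := integral_nonneg fun ω => abs_nonneg _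
  have hFnorm : ∀ k : ℕ, (∫ ω, ‖F k ω‖ ∂μ) ≤ |γa (k : ℤ)| * (2 * C) := by
    intro k
    have : (∫ ω, ‖F k ω‖ ∂μ) ≤ ∫ ω, |γa (k : ℤ)| * (2 * |f ω|) ∂μ := by
      refine integral_mono (hFint k).norm ?_ ?_
      · exact ((hf1.restrict).abs.const_mul 2).const_mul _
      · intro ω; simpa [Real.norm_eq_abs] using hFbd k ω
    calc (∫ ω, ‖F k ω‖ ∂μ) ≤ ∫ ω, |γa (k : ℤ)| * (2 * |f ω|) ∂μ := this
      _ = |γa (k : ℤ)| * (2 * C) := by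
          rw [integral_const_mul, hC]
          rw [integral_const_mul]
  have hFsumnorm : Summable fun k : ℕ => ∫ ω, ‖F k ω‖ ∂μ := by
    refine Summable.of_nonneg_of_le (fun k => integral_nonneg fun ω => norm_nonneg _)
      hFnorm ((hγN'.mul_right (2 * C)).congr fun k => rfl)
  -- interchange sum and integral
  have hkey : (∫ ω, ‖A₀ ω‖ ^ 2 * f ω * Real.sin (2 * ω * τ) ∂μ) = ∑' k : ℕ, ∫ ω, F k ω ∂μ := by
    rw [show (fun ω => ‖A₀ ω‖ ^ 2 * f ω * Real.sin (2 * ω * τ)) = fun ω => ∑' k : ℕ, F k ω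
      from funext hpt]
    exact (integral_tsum_of_summable_integral_norm hFint hFsumnorm).symm
  -- evaluate the integrals of F k
  have hint0 : (∫ ω, F 0 ω ∂μ) = γa 0 * I (2 * τ) := by
    rw [show F 0 = fun ω => γa 0 * (f ω * Real.sin (ω * (2 * τ))) from funext hF0,
      integral_const_mul]
  have hintS : ∀ n : ℕ, (∫ ω, F (n + 1) ω ∂μ) =
      γa ((n : ℤ) + 1) * (I (2 * τ + ((n : ℝ) + 1)) + I (2 * τ - ((n : ℝ) + 1))) := by
    intro n
    rw [show F (n + 1) = fun ω => γa ((n : ℤ) + 1) *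
        (f ω * Real.sin (ω * (2 * τ + ((n : ℝ) + 1))) +
         f ω * Real.sin (ω * (2 * τ - ((n : ℝ) + 1)))) from funext (hFS n),
      integral_const_mul, integral_add (intf _) (intf _)]
  -- summability of the sequence of integrals
  have hintsum : Summable fun k : ℕ => ∫ ω, F k ω ∂μ := by
    refine Summable.of_norm_bounded hFsumnorm fun k => ?_
    exact norm_integral_le_integral_norm _
  -- put everything together
  rw [hG τ, hkey, Summable.tsum_eq_zero_add hintsum, hint0]
  rw [tsum_congr hintS]
  have hgsum : ∀ x : ℝ, g x = -(1 / π) * I x := fun x => hg x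
  have : -(1 / π) * (γa 0 * I (2 * τ) + ∑' n : ℕ, γa ((n : ℤ) + 1) *
      (I (2 * τ + ((n : ℝ) + 1)) + I (2 * τ - ((n : ℝ) + 1))))
      = γa 0 * (-(1 / π) * I (2 * τ)) + ∑' n : ℕ, γa ((n : ℤ) + 1) *
        (-(1 / π) * I (2 * τ + ((n : ℝ) + 1)) + -(1 / π) * I (2 * τ - ((n : ℝ) + 1))) := by
    rw [mul_add, ← tsum_mul_left]
    congr 1
    · ring
    · exact tsum_congr fun n => by ring
  rw [this]
  congr 1
  · rw [hgsum (2 * τ)]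
  · refine tsum_congr fun n => ?_
    rw [hgsum (2 * τ + ((n : ℝ) + 1)), hgsum (2 * τ - ((n : ℝ) + 1))]
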